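/- Let e, k, n be positive integers with k ≤ e - 3 and (n-2)/(n-1) < k/(e-1) ≤ (n-1)/n. Then the numerical semigroup S = ⟨e, e+k+1, e+k+2, ..., 2e-1⟩ has Frobenius number ne + (n-1)k + (n-2) and genus n(n-1)k - (n² - 3n + 1)(e-1). -/

import Mathlib

/-- The set of gaps of a numerical semigroup (submonoid of ℕ). -/
def gapsOf (S : AddSubmonoid ℕ) : Set ℕ := {n | n ∉ S}

/-- The Frobenius number: the largest gap. -/
noncomputable def frobeniusNumber (S : AddSubmonoid ℕ) : ℕ := sSup (gapsOf S)

/-- The genus: the number of gaps. -/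
noncomputable def genusOf (S : AddSubmonoid ℕ) : ℕ := Nat.card (gapsOf S)

/-- A numerical semigroup is symmetric iff 2g = F + 1. -/
def IsSymmetricNS (S : AddSubmonoid ℕ) : Prop :=
  2 * genusOf S = frobeniusNumber S + 1

/-- The Sally type semigroup `S_k^e(j) = ⟨e,…,e+j-1, e+j+k,…,2e-1⟩`. -/
def sally (e k j : ℕ) : AddSubmonoid ℕ :=
  AddSubmonoid.closure (Set.Ico e (e + j) ∪ Set.Ico (e + j + k) (2 * e))


/-- Sums of `a` elements of `[lo, hi]` realize every value in `[a*lo, a*hi]`. -/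
lemma mem_closure_Ico_of_between (lo hi : ℕ) (hlohi : lo ≤ hi) :
    ∀ a y : ℕ, a * lo ≤ y → y ≤ a * hi → y ∈ AddSubmonoid.closure (Set.Ico lo (hi + 1)) := by
  intro a
  induction a with
  | zero => intro y h1 h2; simp at h1 h2; subst h2; exact zero_mem _
  | succ a ih =>
    intro y h1 h2
    have hml : a * lo ≤ a * hi := Nat.mul_le_mul_left a hlohi
    set g : ℕ := min hi (y - a * lo) with hg
    have h1' : a * lo + lo ≤ y := by rw [Nat.succ_mul] at h1; exact h1
    have h2' : y ≤ a * hi + hi := by rw [Nat.succ_mul] at h2; exact h2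
    have hg1 : lo ≤ g := le_min hlohi (by omega)
    have hg2 : g ≤ hi := min_le_left _ _
    have hrec : y - g ∈ AddSubmonoid.closure (Set.Ico lo (hi + 1)) := by
      apply ih
      · rcases min_eq_left_iff.mpr (le_refl hi) with _
        rcases le_or_gt hi (y - a * lo) with h | h
        · have : g = hi := by rw [hg, min_eq_left h]
          omega
        · have : g = y - a * lo := by rw [hg, min_eq_right h.le]
          omega
      · omega
    have hgmem : g ∈ AddSubmonoid.closure (Set.Ico lo (hi + 1)) :=
      AddSubmonoid.subset_closure ⟨hg1, by omega⟩
    have : y = g + (y - g) := by omega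
    rw [this]
    exact AddSubmonoid.add_mem _ hgmem hrec

/-- The over-approximating submonoid. -/
def sallyBound (e k : ℕ) : AddSubmonoid ℕ where
  carrier := {x | ∃ m a : ℕ, a ≤ m ∧ m * e + a * (k + 1) ≤ x ∧ x ≤ m * e + a * (e - 1)}
  zero_mem' := ⟨0, 0, by omega, by simp, by simp⟩
  add_mem' := by
    rintro x y ⟨m1, a1, h1, h2, h3⟩ ⟨m2, a2, g1, g2, g3⟩
    refine ⟨m1 + m2, a1 + a2, by omega, ?_, ?_⟩
    · have : (m1 + m2) * e + (a1 + a2) * (k + 1)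
          = (m1 * e + a1 * (k + 1)) + (m2 * e + a2 * (k + 1)) := by ring
      rw [this]; exact Nat.add_le_add h2 g2
    · have : (m1 + m2) * e + (a1 + a2) * (e - 1)
          = (m1 * e + a1 * (e - 1)) + (m2 * e + a2 * (e - 1)) := by ring
      rw [this]; exact Nat.add_le_add h3 g3

lemma mem_sally_iff (e k : ℕ) (hk : 0 < k) (hek : k + 2 ≤ e) (x : ℕ) :
    x ∈ sally e k 1 ↔
      ∃ m a : ℕ, a ≤ m ∧ m * e + a * (k + 1) ≤ x ∧ x ≤ m * e + a * (e - 1) := by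
  constructor
  · intro hx
    have hle : sally e k 1 ≤ sallyBound e k := by
      rw [sally, AddSubmonoid.closure_le]
      rintro y (⟨hy1, hy2⟩ | ⟨hy1, hy2⟩)
      · exact ⟨1, 0, by omega, by omega, by omega⟩
      · exact ⟨1, 1, by omega, by omega, by omega⟩
    exact hle hx
  · rintro ⟨m, a, ham, hlo, hhi⟩
    have he1 : 0 < e := by omega
    have hme : (m - a) * e ≤ x := by
      have : (m - a) * e ≤ m * e := Nat.mul_le_mul_right e (by omega)
      omega
    set y := x - (m - a) * e with hy
    have hsub : (m - a) * e + a * e = m * e := by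
      rw [← Nat.add_mul]; congr 1; omega
    have hy1 : a * (e + k + 1) ≤ y := by
      have : a * (e + k + 1) = a * e + a * (k + 1) := by ring
      omega
    have hy2 : y ≤ a * (2 * e - 1) := by
      have h2e : a * (2 * e - 1) = a * e + a * (e - 1) := by
        have : 2 * e - 1 = e + (e - 1) := by omega
        rw [this, Nat.mul_add]
      omega
    have hymem : y ∈ AddSubmonoid.closure (Set.Ico (e + k + 1) (2 * e - 1 + 1)) :=
      mem_closure_Ico_of_between _ _ (by omega) a y hy1 hy2
    have h2e1 : 2 * e - 1 + 1 = 2 * e := by omega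
    rw [h2e1] at hymem
    have hmono : y ∈ sally e k 1 := by
      refine AddSubmonoid.closure_mono ?_ hymem
      intro z hz
      right
      rcases hz with ⟨hz1, hz2⟩
      exact ⟨by omega, hz2⟩
    have hemem : e ∈ sally e k 1 :=
      AddSubmonoid.subset_closure (Or.inl ⟨le_refl e, by omega⟩)
    have : x = (m - a) * e + y := by omega
    rw [this]
    refine AddSubmonoid.add_mem _ ?_ hmono
    have := AddSubmonoid.nsmul_mem (sally e k 1) hemem (m - a)
    simpa [smul_eq_mul, Nat.mul_comm] using this

section gaps
variable {e k d : ℕ} (he : e = k + d + 1) (hd : 2 ≤ d) (hk : 1 ≤ k)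

include he hd hk in
lemma sally_not_mem_small {x : ℕ} (hx1 : 1 ≤ x) (hx2 : x < e) : x ∉ sally e k 1 := by
  intro hx
  rw [mem_sally_iff e k (by omega) (by omega)] at hx
  obtain ⟨m, a, ham, hlo, hhi⟩ := hx
  rcases Nat.eq_zero_or_pos m with hm | hm
  · subst hm
    have : a = 0 := by omega
    subst this
    simp at hlo hhi
    omega
  · have : e ≤ m * e := by
      calc e = 1 * e := (one_mul e).symm
      _ ≤ m * e := Nat.mul_le_mul_right e hm
    omega

include he hd hk in
lemma sally_not_mem (i m t : ℕ) (ht1 : 1 ≤ t) (ht2 : t + i * d ≤ k)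
    (hm : m ≤ 2 * i + 2) : m * e + t ∉ sally e k 1 := by
  intro hx
  rw [mem_sally_iff e k (by omega) (by omega)] at hx
  obtain ⟨m', a, ham, hlo, hhi⟩ := hx
  have htk : t ≤ k := by omega
  have hte : t < e := by omega
  rcases Nat.eq_zero_or_pos a with ha | ha
  · subst ha
    simp at hlo hhi
    rcases le_or_gt m' m with h | h
    · have := Nat.mul_le_mul_right e h
      omega
    · have : (m + 1) * e ≤ m' * e := Nat.mul_le_mul_right e h
      have : (m + 1) * e = m * e + e := by ring
      omega
  · -- a ≥ 1
    have hak : k + 1 ≤ a * (k + 1) := by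
      calc k + 1 = 1 * (k + 1) := (one_mul _).symm
      _ ≤ a * (k + 1) := Nat.mul_le_mul_right _ ha
    have hm'm : m' ≤ m := by
      by_contra h
      push_neg at h
      have h1 : (m + 1) * e ≤ m' * e := Nat.mul_le_mul_right e h
      have h2 : (m + 1) * e = m * e + e := by ring
      omega
    set q := m - m' with hq
    have hsplit : m * e = m' * e + q * e := by
      rw [← Nat.add_mul]; congr 1; omega
    have hlo' : a * (k + 1) ≤ q * e + t := by omega
    have hhi' : q * e + t ≤ a * (e - 1) := by omega
    have hae : a * (e - 1) + a = a * e := by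
      rw [← Nat.mul_succ]; congr 1; omega
    have hqa : q < a := by
      have h1 : q * e < a * e := by omega
      exact Nat.lt_of_mul_lt_mul_right h1
    set b := a - 1 with hb
    have hab : a = b + 1 := by omega
    have hqb : q ≤ b := by omega
    have hqe : q * e ≤ b * e := Nat.mul_le_mul_right e hqb
    have hkey : k + 1 ≤ b * d + t := by
      have e1 : (b + 1) * (k + 1) = b * k + b + k + 1 := by ring
      have e2 : b * e = b * k + b * d + b := by rw [he]; ring
      have := hlo'
      rw [hab] at this
      linarith
    have hib : i < b := by
      by_contra h
      push_neg at h
      have : b * d ≤ i * d := Nat.mul_le_mul_right d h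
      omega
    have hs : ∃ s, a = i + 2 + s := ⟨a - (i + 2), by omega⟩
    obtain ⟨s, hsa⟩ := hs
    have hqs : q + s ≤ i := by omega
    have h1 : (q + s) * (k + d + 1) ≤ i * (k + d + 1) := Nat.mul_le_mul_right _ hqs
    have e2 : (q + s) * (k + d + 1) = q * (k + d + 1) + s * (k + d + 1) := by ring
    have e3 : i * (k + d + 1) = i * k + i * d + i := by ring
    have e4 : (i + 2 + s) * (k + 1) = i * k + i + 2 * k + 2 + s * k + s := by ring
    have e5 : q * e = q * (k + d + 1) := by rw [he]
    have e6 : s * (k + d + 1) = s * k + s * d + s := by ring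
    rw [hsa] at hlo'
    have key : (i + 2 + s) * (k + 1) + s * (k + d + 1) ≤ i * (k + d + 1) + t := by
      calc (i + 2 + s) * (k + 1) + s * (k + d + 1) ≤ q * e + t + s * (k + d + 1) := by omega
      _ = (q + s) * (k + d + 1) + t := by rw [e5]; ring
      _ ≤ i * (k + d + 1) + t := by omega
    rw [e3, e4, e6] at key
    omega

end gaps

section gaps2
variable {e k d : ℕ} (he : e = k + d + 1) (hd : 2 ≤ d) (hk : 1 ≤ k)

include he hd hk in
lemma sally_mem_mul (m : ℕ) : m * e ∈ sally e k 1 := by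
  rw [mem_sally_iff e k (by omega) (by omega)]
  exact ⟨m, 0, by omega, by omega, by omega⟩

include he hd hk in
lemma sally_mem (m t j : ℕ) (ht1 : 1 ≤ t) (ht2 : t ≤ e - 1)
    (hjm : 2 * j + 1 ≤ m) (hjt : k + 1 ≤ t + j * d) : m * e + t ∈ sally e k 1 := by
  rw [mem_sally_iff e k (by omega) (by omega)]
  have hP : ∃ j', k + 1 ≤ t + j' * d := ⟨j, hjt⟩
  classical
  set j0 := Nat.find hP with hj0
  have hspec : k + 1 ≤ t + j0 * d := Nat.find_spec hP
  have hj0j : j0 ≤ j := Nat.find_min' hP hjt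
  refine ⟨m - j0, j0 + 1, ?_, ?_, ?_⟩
  · omega
  · -- (m - j0) * e + (j0+1) * (k+1) ≤ m * e + t
    have hsplit : (m - j0) * e + j0 * e = m * e := by
      rw [← Nat.add_mul]; congr 1; omega
    have e1 : (j0 + 1) * (k + 1) = j0 * k + j0 + k + 1 := by ring
    have e2 : j0 * e = j0 * k + j0 * d + j0 := by rw [he]; ring
    omega
  · -- m * e + t ≤ (m - j0) * e + (j0+1) * (e-1)
    have hsplit : (m - j0) * e + j0 * e = m * e := by
      rw [← Nat.add_mul]; congr 1; omega
    have hte : t + j0 ≤ k + d := by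
      rcases Nat.eq_zero_or_pos j0 with h0 | h0
      · omega
      · have hmin : ¬ (k + 1 ≤ t + (j0 - 1) * d) := Nat.find_min hP (by omega)
        push_neg at hmin
        set w := j0 - 1 with hw
        have hwd : w ≤ w * d := Nat.le_mul_of_pos_right w (by omega)
        omega
    have e1 : (j0 + 1) * (e - 1) + (j0 + 1) = (j0 + 1) * e := by
      rw [← Nat.mul_succ]; congr 1; omega
    have e2 : (j0 + 1) * e = j0 * e + e := by ring
    omega

end gaps2

def gapFinset (e k d N : ℕ) : Finset ℕ :=
  Finset.Ico 1 e ∪ (Finset.range (2 * N + 2)).biUnion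
    (fun j => Finset.Ico ((j + 1) * e + 1) ((j + 1) * e + (k - (j / 2) * d) + 1))

section gaps3
variable {e k d N : ℕ} (he : e = k + d + 1) (hd : 2 ≤ d) (hk : 1 ≤ k)
  (hA : N * d < k) (hB : k ≤ (N + 1) * d)

include he hd hk hA hB in
lemma gaps_sally_eq : gapsOf (sally e k 1) = ↑(gapFinset e k d N) := by
  ext x
  simp only [gapsOf, Set.mem_setOf_eq, gapFinset, Finset.coe_union, Finset.coe_biUnion,
    Set.mem_union, Finset.coe_Ico, Set.mem_Ico, Set.mem_iUnion, Finset.mem_coe,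
    Finset.mem_range]
  constructor
  · intro hx
    have he0 : 0 < e := by omega
    have hxe : x = x / e * e + x % e := (Nat.div_add_mod' x e).symm
    set m := x / e with hm
    set t := x % e with ht
    have hte : t < e := Nat.mod_lt _ he0
    have ht0 : t ≠ 0 := by
      intro h
      rw [h, Nat.add_zero] at hxe
      exact hx (hxe ▸ sally_mem_mul he hd hk m)
    rcases Nat.eq_zero_or_pos m with hm0 | hm1
    · left
      rw [hm0, Nat.zero_mul, Nat.zero_add] at hxe
      omega
    · right
      have hmle : m ≤ 2 * N + 2 := by
        by_contra hcon
        push_neg at hcon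
        exact hx (hxe ▸ sally_mem he hd hk m t (N + 1) (by omega) (by omega)
          (by omega) (by omega))
      refine ⟨m - 1, by omega, ?_, ?_⟩
      · have : (m - 1 + 1) * e = m * e := by congr 1; omega
        omega
      · set i := (m - 1) / 2 with hi
        have hi2 : 2 * i ≤ m - 1 ∧ m - 1 < 2 * i + 2 := by omega
        have hcon : t + i * d ≤ k := by
          by_contra hcon
          push_neg at hcon
          exact hx (hxe ▸ sally_mem he hd hk m t i (by omega) (by omega)
            (by omega) (by omega))
        have hik : i * d ≤ k := by omega
        have : (m - 1 + 1) * e = m * e := by congr 1; omega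
        omega
  · rintro (⟨h1, h2⟩ | ⟨j, hj, h1, h2⟩)
    · exact sally_not_mem_small he hd hk h1 h2
    · set i := j / 2 with hi
      have hi2 : 2 * i ≤ j ∧ j < 2 * i + 2 := by omega
      have hiN : i ≤ N := by omega
      have hik : i * d ≤ N * d := Nat.mul_le_mul_right d hiN
      set t := x - (j + 1) * e with htdef
      have hxt : x = (j + 1) * e + t := by omega
      have ht1 : 1 ≤ t := by omega
      have ht2 : t + i * d ≤ k := by omega
      rw [hxt]
      exact sally_not_mem he hd hk i (j + 1) t ht1 ht2 (by omega)

end gaps3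

section gaps4
variable {e k d N : ℕ} (he : e = k + d + 1) (hd : 2 ≤ d) (hk : 1 ≤ k)
  (hA : N * d < k) (hB : k ≤ (N + 1) * d)

include he hd hk hA hB in
lemma sally_isGreatest :
    IsGreatest (gapsOf (sally e k 1)) ((2 * N + 2) * e + (k - N * d)) := by
  rw [gaps_sally_eq he hd hk hA hB]
  constructor
  · simp only [gapFinset, Finset.coe_union, Set.mem_union, Finset.coe_biUnion,
      Set.mem_iUnion, Finset.mem_coe, Finset.mem_range, Finset.mem_Ico]
    right
    refine ⟨2 * N + 1, by omega, ?_, ?_⟩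
    · have h1 : (2 * N + 1 + 1) * e = (2 * N + 2) * e := by congr 1
      omega
    · have h1 : (2 * N + 1 + 1) * e = (2 * N + 2) * e := by congr 1
      have h2 : (2 * N + 1) / 2 = N := by omega
      rw [h2]
      omega
  · intro x hx
    simp only [gapFinset, Finset.coe_union, Set.mem_union, Finset.coe_biUnion,
      Set.mem_iUnion, Finset.mem_coe, Finset.mem_range, Finset.mem_Ico] at hx
    rcases hx with ⟨h1, h2⟩ | ⟨j, hj, h1, h2⟩
    · have : e ≤ (2 * N + 2) * e := Nat.le_mul_of_pos_left e (by omega)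
      omega
    · have hje : (j + 1) * e ≤ (2 * N + 2) * e := Nat.mul_le_mul_right e (by omega)
      rcases Nat.lt_or_ge j (2 * N + 1) with hj' | hj'
      · have hje2 : (j + 2) * e ≤ (2 * N + 2) * e := Nat.mul_le_mul_right e (by omega)
        have hsk : k - j / 2 * d ≤ k := Nat.sub_le _ _
        have : (j + 2) * e = (j + 1) * e + e := by ring
        omega
      · have hj2N : j = 2 * N + 1 := by omega
        subst hj2N
        have h2' : (2 * N + 1) / 2 = N := by omega
        rw [h2'] at h2
        have h1 : (2 * N + 1 + 1) * e = (2 * N + 2) * e := by congr 1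
        omega

lemma sum_pair (M : ℕ) (f : ℕ → ℕ) :
    ∑ j ∈ Finset.range (2 * M), f (j / 2) = ∑ i ∈ Finset.range M, 2 * f i := by
  induction M with
  | zero => simp
  | succ M ih =>
    have h1 : 2 * (M + 1) = (2 * M + 1) + 1 := by ring
    rw [h1, Finset.sum_range_succ, Finset.sum_range_succ, ih, Finset.sum_range_succ]
    have h2 : (2 * M + 1) / 2 = M := by omega
    have h3 : (2 * M) / 2 = M := by omega
    rw [h2, h3]
    ring

include he hd hk hA hB in
lemma sally_card :
    (gapFinset e k d N).card = (e - 1) + ∑ i ∈ Finset.range (N + 1), 2 * (k - i * d) := by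
  rw [gapFinset]
  rw [Finset.card_union_of_disjoint, Finset.card_biUnion]
  · rw [Nat.card_Ico]
    congr 1
    rw [Finset.sum_congr rfl (fun (j : ℕ) (hj : j ∈ Finset.range (2 * N + 2)) =>
      (Nat.card_Ico ((j + 1) * e + 1) ((j + 1) * e + (k - j / 2 * d) + 1)))]
    calc ∑ j ∈ Finset.range (2 * N + 2),
          ((j + 1) * e + (k - j / 2 * d) + 1 - ((j + 1) * e + 1))
        = ∑ j ∈ Finset.range (2 * N + 2), (k - j / 2 * d) :=
          Finset.sum_congr rfl (fun j hj => by omega)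
      _ = ∑ j ∈ Finset.range (2 * (N + 1)), (k - j / 2 * d) := by
          rw [show 2 * (N + 1) = 2 * N + 2 by ring]
      _ = ∑ i ∈ Finset.range (N + 1), 2 * (k - i * d) :=
          sum_pair (N + 1) (fun i => k - i * d)
  · -- pairwise disjoint
    intro j1 h1 j2 h2 hne
    simp only [Finset.mem_coe, Finset.mem_range] at h1 h2
    rw [Function.onFun, Finset.disjoint_left]
    intro x hx1 hx2
    simp only [Finset.mem_Ico] at hx1 hx2
    rcases Nat.lt_or_ge j1 j2 with h | h
    · have hj : (j1 + 2) * e ≤ (j2 + 1) * e := Nat.mul_le_mul_right e (by omega)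
      have h1' : (j1 + 2) * e = (j1 + 1) * e + e := by ring
      have hsk : k - j1 / 2 * d ≤ k := Nat.sub_le _ _
      omega
    · have h' : j2 < j1 := by omega
      have hj : (j2 + 2) * e ≤ (j1 + 1) * e := Nat.mul_le_mul_right e (by omega)
      have h1' : (j2 + 2) * e = (j2 + 1) * e + e := by ring
      have hsk : k - j2 / 2 * d ≤ k := Nat.sub_le _ _
      omega
  · -- disjoint Ico 1 e with biUnion
    rw [Finset.disjoint_left]
    intro x hx1 hx2
    simp only [Finset.mem_Ico, Finset.mem_biUnion, Finset.mem_range] at hx1 hx2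
    obtain ⟨j, hj, hxx, _⟩ := hx2
    have : e ≤ (j + 1) * e := Nat.le_mul_of_pos_left e (by omega)
    omega

end gaps4

theorem sally_j_one_frobenius_genus (e k n : ℕ) (he : 0 < e) (hk : 0 < k) (hn : 0 < n)
    (hke : k ≤ e - 3)
    (h1 : ((n : ℚ) - 2) / ((n : ℚ) - 1) < (k : ℚ) / ((e : ℚ) - 1))
    (h2 : (k : ℚ) / ((e : ℚ) - 1) ≤ ((n : ℚ) - 1) / n) :
    (frobeniusNumber (sally e k 1) : ℤ) = n * e + (n - 1) * k + (n - 2) ∧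
    (genusOf (sally e k 1) : ℤ) = n * (n - 1) * k - (n ^ 2 - 3 * n + 1) * (e - 1) := by
  -- basic bounds
  have hek : k + 3 ≤ e := by omega
  -- n ≥ 2
  have hQe : (0 : ℚ) < (e : ℚ) - 1 := by
    have : (4 : ℚ) ≤ (e : ℚ) := by exact_mod_cast (by omega : 4 ≤ e)
    linarith
  have hQk : (0 : ℚ) < (k : ℚ) := by exact_mod_cast hk
  have hn2 : 2 ≤ n := by
    by_contra hcon
    have : n = 1 := by omega
    subst this
    norm_num at h2
    have := div_pos hQk hQe
    linarith
  obtain ⟨N, rfl⟩ : ∃ N, n = N + 2 := ⟨n - 2, by omega⟩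
  obtain ⟨d, rfl, hd⟩ : ∃ d, e = k + d + 1 ∧ 2 ≤ d := ⟨e - k - 1, by omega, by omega⟩
  set e := k + d + 1 with hedef
  have he : e = k + d + 1 := rfl
  push_cast [he] at h1 h2
  have hN0 : (0 : ℚ) ≤ (N : ℚ) := by positivity
  have hQn1 : (0 : ℚ) < ((N : ℚ) + 2) - 1 := by linarith
  have hd0 : (0 : ℚ) ≤ (d : ℚ) := by positivity
  have hQe2 : (0 : ℚ) < (k : ℚ) + (d : ℚ) + 1 - 1 := by linarith
  rw [div_lt_div_iff₀ hQn1 hQe2] at h1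
  rw [div_le_div_iff₀ hQe2 (by linarith : (0:ℚ) < ((N:ℚ) + 2))] at h2
  have hAq : (N : ℚ) * d < k := by nlinarith
  have hBq : (k : ℚ) ≤ ((N : ℚ) + 1) * d := by nlinarith
  have hA : N * d < k := by exact_mod_cast hAq
  have hB : k ≤ (N + 1) * d := by exact_mod_cast hBq
  have hGreat := sally_isGreatest he hd hk hA hB
  have hgaps := gaps_sally_eq he hd hk hA hB
  have hcard := sally_card (e := e) (k := k) (d := d) (N := N) he hd hk hA hB
  constructor
  · -- Frobenius
    have hfrob : frobeniusNumber (sally e k 1) = (2 * N + 2) * e + (k - N * d) :=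
      hGreat.csSup_eq
    rw [hfrob]
    have hNd : N * d ≤ k := le_of_lt hA
    push_cast [Nat.cast_sub hNd, he]
    ring
  · -- genus
    have hgen : genusOf (sally e k 1) = (gapFinset e k d N).card := by
      rw [genusOf, hgaps, Nat.card_coe_set_eq, Set.ncard_coe_finset]
    rw [hgen, hcard]
    have he1 : e - 1 = k + d := by omega
    rw [he1]
    have hsum : ((∑ i ∈ Finset.range (N + 1), 2 * (k - i * d) : ℕ) : ℤ)
        = ∑ i ∈ Finset.range (N + 1), (2 * (k : ℤ) - 2 * i * d) := by
      rw [Nat.cast_sum]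
      refine Finset.sum_congr rfl (fun i hi => ?_)
      have hik : i * d ≤ k := by
        have : i * d ≤ N * d := Nat.mul_le_mul_right d (by
          simp only [Finset.mem_range] at hi; omega)
        omega
      push_cast [Nat.cast_sub hik]
      ring
    have hGauss : (∑ i ∈ Finset.range (N + 1), (i : ℤ)) * 2 = (N + 1) * N := by
      have := Finset.sum_range_id_mul_two (N + 1)
      have := congrArg (fun x : ℕ => (x : ℤ)) this
      push_cast at this
      simpa using this
    have hsum2 : ∑ i ∈ Finset.range (N + 1), (2 * (k : ℤ) - 2 * i * d)
        = ((N : ℤ) + 1) * (2 * k) - 2 * d * (∑ i ∈ Finset.range (N + 1), (i : ℤ)) := by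
      calc ∑ i ∈ Finset.range (N + 1), (2 * (k : ℤ) - 2 * i * d)
          = ∑ i ∈ Finset.range (N + 1), (2 * (k : ℤ))
            - ∑ i ∈ Finset.range (N + 1), (2 * (d : ℤ) * i) := by
            rw [← Finset.sum_sub_distrib]
            exact Finset.sum_congr rfl (fun i _ => by ring)
        _ = ((N : ℤ) + 1) * (2 * k) - 2 * d * (∑ i ∈ Finset.range (N + 1), (i : ℤ)) := by
            congr 1
            · rw [Finset.sum_const, Finset.card_range, nsmul_eq_mul]
              push_cast
              ring
            · exact (Finset.mul_sum _ _ _).symm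
    rw [Nat.cast_add, hsum, hsum2, he]
    push_cast
    linear_combination (-(d : ℤ)) * hGauss
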